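/- If G is a subcubic simple graph without isolated vertices satisfying ν_ac(G) < (n(G) − κ_G(K_{2,3}) − κ_G(K_4^+) − 2·κ_G(K_{3,3}))/4 and G has minimum order among all such graphs, then no two vertices of degree 1 in G have a common neighbor. -/

import Mathlib

open SimpleGraph

/-- `K4plus` is the graph obtained from `K_4` (on vertices 0,1,2,3) by subdividing
the edge between 0 and 1 once, using 4 as the subdivision vertex. -/
def K4plus : SimpleGraph (Fin 5) :=
  SimpleGraph.fromRel (fun a b =>
    (a, b) ∈ ([(0,2),(0,3),(1,2),(1,3),(2,3),(0,4),(1,4)] : List (Fin 5 × Fin 5)))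

/-- The complete bipartite graph `K_{2,3}`. -/
def K23 : SimpleGraph (Fin 2 ⊕ Fin 3) := completeBipartiteGraph (Fin 2) (Fin 3)

/-- The complete bipartite graph `K_{3,3}`. -/
def K33 : SimpleGraph (Fin 3 ⊕ Fin 3) := completeBipartiteGraph (Fin 3) (Fin 3)

/-- A matching `M` in `G` is acyclic if the subgraph of `G` induced by the set of
vertices incident to an edge of `M` is a forest. -/
def IsAcyclicMatching {V : Type*} (G : SimpleGraph V) (M : G.Subgraph) : Prop :=
  M.IsMatching ∧ (G.induce M.support).IsAcyclic

/-- The acyclic matching number of `G`: the maximum number of edges of an acyclic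
matching in `G`. -/
noncomputable def acyclicMatchingNumber {V : Type*} (G : SimpleGraph V) : ℕ :=
  sSup {k | ∃ M : G.Subgraph, IsAcyclicMatching G M ∧ M.edgeSet.ncard = k}

/-- `kappa G H` is the number of connected components of `G` whose induced subgraph
is isomorphic to `H`. -/
noncomputable def kappa {V W : Type*} (G : SimpleGraph V) (H : SimpleGraph W) : ℕ :=
  Nat.card {c : G.ConnectedComponent // Nonempty ((G.induce c.supp) ≃g H)}

/-- A graph is subcubic if every vertex has degree at most 3. -/
def Subcubic {V : Type*} (G : SimpleGraph V) : Prop :=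
  ∀ v, (G.neighborSet v).ncard ≤ 3

/-- A graph has no isolated vertices if every vertex has a neighbor. -/
def NoIsolatedVerts {V : Type*} (G : SimpleGraph V) : Prop :=
  ∀ v, ∃ w, G.Adj v w

/-- The lower bound `(n(G) - κ_G(K_{2,3}) - κ_G(K_4^+) - 2 κ_G(K_{3,3}))/4`. -/
noncomputable def acmBound {V : Type*} [Fintype V] (G : SimpleGraph V) : ℚ :=
  ((Fintype.card V : ℚ) - kappa G K23 - kappa G K4plus - 2 * kappa G K33) / 4

/-- `G` is a counterexample of minimum order to the bound
`ν_ac(G) ≥ (n(G) - κ_G(K_{2,3}) - κ_G(K_4^+) - 2 κ_G(K_{3,3}))/4`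
among subcubic graphs without isolated vertices. -/
def IsMinCounterexample {V : Type} [Fintype V] (G : SimpleGraph V) : Prop :=
  Subcubic G ∧ NoIsolatedVerts G ∧ (acyclicMatchingNumber G : ℚ) < acmBound G ∧
  ∀ (W : Type) [Fintype W] (H : SimpleGraph W),
    Subcubic H → NoIsolatedVerts H → (acyclicMatchingNumber H : ℚ) < acmBound H →
    Fintype.card V ≤ Fintype.card W


/-! ### Auxiliary machinery -/

section Aux

variable {V W : Type*} {G : SimpleGraph V}

/-- The inclusion homomorphism from an induced subgraph. -/
def ihom (G : SimpleGraph V) (s : Set V) : G.induce s →g G :=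
  ⟨Subtype.val, fun {a b} h => h⟩

lemma ihom_inj {s : Set V} : Function.Injective (ihom G s) := Subtype.val_injective

lemma cycle_two_nbrs {z : V} {c : G.Walk z z} (hc : c.IsCycle) :
    ∃ a b, a ≠ b ∧ G.Adj z a ∧ G.Adj z b ∧ a ∈ c.support ∧ b ∈ c.support := by
  cases c with
  | nil => exact absurd rfl hc.ne_nil
  | @cons _ b _ h q =>
    obtain ⟨b', h', r, hqr⟩ := Walk.exists_eq_cons_of_ne h.ne q.reverse
    refine ⟨b, b', ?_, h, h', ?_, ?_⟩
    · rintro rfl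
      have he : s(z, b) ∈ q.edges := by
        have : s(z, b) ∈ q.reverse.edges := by rw [hqr]; simp
        simpa [Walk.edges_reverse] using this
      have := hc.isTrail.edges_nodup
      rw [Walk.edges_cons] at this
      exact (List.nodup_cons.mp this).1 he
    · simp
    · have : b' ∈ q.reverse.support := by rw [hqr]; simp
      rw [Walk.support_reverse, List.mem_reverse] at this
      simp [Walk.support_cons, this]

lemma not_mem_cycle_support {z y : V} {c : G.Walk y y} (hc : c.IsCycle)
    (hz : ∀ a b, G.Adj z a → G.Adj z b → a = b) : z ∉ c.support := by
  classical
  intro hmem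
  obtain ⟨a, b, hab, ha, hb, _, _⟩ := cycle_two_nbrs (hc.rotate hmem)
  exact hab (hz a b ha hb)

lemma exists_induce_walk {A : Set V} :
    ∀ {a b : V} (p : G.Walk a b) (_ : ∀ x ∈ p.support, x ∈ A) (ha : a ∈ A) (hb : b ∈ A),
    ∃ q : (G.induce A).Walk ⟨a, ha⟩ ⟨b, hb⟩, q.map (ihom G A) = p := by
  intro a b p
  induction p with
  | nil => exact fun _ ha _ => ⟨Walk.nil, rfl⟩
  | @cons a c b h p' ih =>
    intro hp ha hb
    have hc : c ∈ A := hp c (by simp)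
    obtain ⟨q', hq'⟩ := ih (fun x hx => hp x (by simp [hx])) hc hb
    exact ⟨Walk.cons (by exact h) q', by subst hq'; rfl⟩

lemma isAcyclic_of_embedding {H : SimpleGraph W} (f : G ↪g H)
    (h : H.IsAcyclic) : G.IsAcyclic := by
  intro v c hc
  exact h (c.map f.toHom) ((Walk.map_isCycle_iff_of_injective f.injective).mpr hc)

lemma acyclic_extend {A : Set V} {u w x₀ : V} (hA : (G.induce A).IsAcyclic)
    (huA : u ∉ A) (hwA : w ∉ A)
    (hu : ∀ y, G.Adj u y → y = w)
    (hw : ∀ y ∈ A, G.Adj w y → y = x₀) :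
    (G.induce (A ∪ {u, w})).IsAcyclic := by
  classical
  intro z c hc
  have hcyc : (c.map (ihom G (A ∪ {u, w}))).IsCycle :=
    (Walk.map_isCycle_iff_of_injective ihom_inj).mpr hc
  generalize hc2 : c.map (ihom G (A ∪ {u, w})) = c2 at hcyc
  have hsupp : ∀ x ∈ c2.support, x ∈ A ∪ {u, w} := by
    intro x hx
    rw [← hc2, Walk.support_map] at hx
    obtain ⟨x', _, rfl⟩ := List.mem_map.mp hx
    exact x'.2
  have hune : u ∉ c2.support :=
    not_mem_cycle_support hcyc (fun a b ha hb => (hu a ha).trans (hu b hb).symm)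
  have hwne : w ∉ c2.support := by
    intro hmem
    obtain ⟨a, b, hab, ha, hb, has, hbs⟩ := cycle_two_nbrs (hcyc.rotate hmem)
    have hrs : ∀ x, x ∈ (c2.rotate w hmem).support → x ∈ c2.support := by
      intro x hx
      rcases (Walk.mem_support_iff _).mp hx with h | h
      · exact h ▸ hmem
      · exact List.mem_of_mem_tail (((Walk.support_rotate c2 w hmem).mem_iff).mp h)
    have haA : a ∈ A := by
      rcases hsupp a (hrs a has) with h | h
      · exact h
      · rcases h with h | h
        · exact absurd (hrs a has) (h ▸ hune)
        · exact absurd (h : a = w) ha.ne'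
    have hbA : b ∈ A := by
      rcases hsupp b (hrs b hbs) with h | h
      · exact h
      · rcases h with h | h
        · exact absurd (hrs b hbs) (h ▸ hune)
        · exact absurd (h : b = w) hb.ne'
    exact hab ((hw a haA ha).trans (hw b hbA hb).symm)
  have hsuppA : ∀ x ∈ c2.support, x ∈ A := by
    intro x hx
    rcases hsupp x hx with h | h
    · exact h
    · rcases h with h | h
      · exact absurd hx (h ▸ hune)
      · exact absurd hx (h ▸ hwne)
  have hzA : z.val ∈ A := by
    apply hsuppA
    rw [← hc2]
    exact Walk.start_mem_support _
  obtain ⟨q, hq⟩ := exists_induce_walk c2 hsuppA hzA hzA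
  have hqc : q.IsCycle := by
    rw [← Walk.map_isCycle_iff_of_injective (f := ihom G A) ihom_inj, hq]
    exact hcyc
  exact hA q hqc

lemma support_map' {G' : SimpleGraph W} (f : G →g G') (M : G.Subgraph) :
    (M.map f).support = f '' M.support := by
  ext z
  constructor
  · rintro ⟨y, hy⟩
    obtain ⟨a, b, hab, rfl, rfl⟩ := hy
    exact ⟨a, ⟨b, hab⟩, rfl⟩
  · rintro ⟨a, ⟨b, hab⟩, rfl⟩
    exact ⟨f b, a, b, hab, rfl, rfl⟩

lemma edgeSet_map' {G' : SimpleGraph W} (f : G →g G') (M : G.Subgraph) :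
    (M.map f).edgeSet = Sym2.map f '' M.edgeSet := by
  ext e
  induction e with
  | _ a b =>
    simp only [SimpleGraph.Subgraph.mem_edgeSet, SimpleGraph.Subgraph.map_adj, Relation.Map]
    constructor
    · rintro ⟨a', b', hab, rfl, rfl⟩
      exact ⟨s(a', b'), hab, rfl⟩
    · rintro ⟨e', he', hee⟩
      induction e' with
      | _ x y =>
        rw [Sym2.map_pair_eq, Sym2.eq_iff] at hee
        rcases hee with ⟨rfl, rfl⟩ | ⟨rfl, rfl⟩
        · exact ⟨x, y, he', rfl, rfl⟩
        · exact ⟨y, x, he'.symm, rfl, rfl⟩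

lemma isMatching_map {G' : SimpleGraph W} {f : G →g G'} (hf : Function.Injective f)
    {M : G.Subgraph} (hM : M.IsMatching) : (M.map f).IsMatching := by
  rintro v hv
  obtain ⟨a, ha, rfl⟩ := hv
  obtain ⟨b, hb, hb'⟩ := hM ha
  refine ⟨f b, ⟨a, b, hb, rfl, rfl⟩, ?_⟩
  rintro y ⟨a', b', hab', ha', rfl⟩
  rw [hb' b' (hf ha' ▸ hab')]

lemma support_bot' : (⊥ : G.Subgraph).support = ∅ := by
  ext v
  simp [SimpleGraph.Subgraph.mem_support]

lemma support_sup' (M N : G.Subgraph) : (M ⊔ N).support = M.support ∪ N.support := by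
  ext v
  simp only [SimpleGraph.Subgraph.mem_support, SimpleGraph.Subgraph.sup_adj, Set.mem_union]
  exact exists_or

noncomputable def induceInduceIso (s : Set V) (t : Set ↥s) :
    ((G.induce s).induce t) ≃g G.induce (Subtype.val '' t) where
  toEquiv := (Equiv.Set.image Subtype.val t Subtype.val_injective).trans
      (Equiv.setCongr rfl)
  map_rel_iff' := by intro a b; rfl

noncomputable def induceCongr {s t : Set V} (h : s = t) : G.induce s ≃g G.induce t where
  toEquiv := Equiv.setCongr h
  map_rel_iff' := by intro a b; rfl

lemma walk_stays {C : Set V} (hC : ∀ a ∈ C, ∀ b, G.Adj a b → b ∈ C) :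
    ∀ {a b : V}, G.Walk a b → a ∈ C → b ∈ C := by
  intro a b p
  induction p with
  | nil => exact id
  | cons h _ ih => exact fun ha => ih (hC _ ha _ h)

def compMap (G : SimpleGraph V) (s : Set V) (c : (G.induce s).ConnectedComponent) :
    G.ConnectedComponent := c.map (ihom G s)

lemma supp_compMap {s : Set V} {c : (G.induce s).ConnectedComponent}
    (hcl : ∀ a ∈ (Subtype.val '' c.supp), ∀ b, G.Adj a b → b ∈ Subtype.val '' c.supp) :
    (compMap G s c).supp = Subtype.val '' c.supp := by
  obtain ⟨a, ha⟩ := c.exists_rep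
  ext z
  constructor
  · intro hz
    rw [ConnectedComponent.mem_supp_iff] at hz
    have hmap : compMap G s c = G.connectedComponentMk a.val := by
      rw [← ha]; rfl
    rw [hmap] at hz
    have hreach : G.Reachable a.val z := (ConnectedComponent.eq.mp hz).symm
    obtain ⟨p⟩ := hreach
    exact walk_stays hcl p ⟨a, (ConnectedComponent.mem_supp_iff _ _).mpr ha, rfl⟩
  · rintro ⟨a', ha', rfl⟩
    rw [ConnectedComponent.mem_supp_iff] at ha' ⊢
    rw [← ha']; rfl

lemma compMap_inj {s : Set V} {c c' : (G.induce s).ConnectedComponent}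
    (hcl : ∀ a ∈ (Subtype.val '' c.supp), ∀ b, G.Adj a b → b ∈ Subtype.val '' c.supp)
    (hcl' : ∀ a ∈ (Subtype.val '' c'.supp), ∀ b, G.Adj a b → b ∈ Subtype.val '' c'.supp)
    (h : compMap G s c = compMap G s c') : c = c' := by
  have h2 : Subtype.val '' c.supp = Subtype.val '' c'.supp := by
    rw [← supp_compMap hcl, ← supp_compMap hcl', h]
  have h3 : c.supp = c'.supp :=
    Set.image_injective.mpr Subtype.val_injective h2
  exact ConnectedComponent.supp_injective h3

noncomputable def compMapIso {s : Set V} {c : (G.induce s).ConnectedComponent}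
    (hcl : ∀ a ∈ (Subtype.val '' c.supp), ∀ b, G.Adj a b → b ∈ Subtype.val '' c.supp)
    {T : SimpleGraph W} (e : ((G.induce s).induce c.supp) ≃g T) :
    (G.induce (compMap G s c).supp) ≃g T :=
  (induceCongr (supp_compMap hcl)).trans ((induceInduceIso s c.supp).symm.trans e)

lemma closed_of_pex {s : Set V} {x : V}
    (hcl : ∀ a ∈ s, ∀ b, G.Adj a b → b ∈ s ∨ a = x)
    {c : (G.induce s).ConnectedComponent}
    (hpex : ∀ hx : x ∈ s, (⟨x, hx⟩ : ↥s) ∉ c.supp) :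
    ∀ a ∈ (Subtype.val '' c.supp), ∀ b, G.Adj a b → b ∈ Subtype.val '' c.supp := by
  rintro a ⟨a', ha', rfl⟩ b hadj
  rcases hcl a'.val a'.2 b hadj with hb | hax
  · refine ⟨⟨b, hb⟩, ?_, rfl⟩
    rw [ConnectedComponent.mem_supp_iff] at ha' ⊢
    rw [← ha']
    exact ConnectedComponent.eq.mpr (Adj.reachable (by exact hadj.symm : (G.induce s).Adj ⟨b, hb⟩ a'))
  · exfalso
    have hxs : x ∈ s := hax ▸ a'.2
    exact hpex hxs (by rwa [show (⟨x, hxs⟩ : ↥s) = a' from Subtype.ext hax.symm])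

section FiniteV
variable [Finite V]

lemma kappa_le_of_not_special {s : Set V} {x : V}
    (hcl : ∀ a ∈ s, ∀ b, G.Adj a b → b ∈ s ∨ a = x) (T : SimpleGraph W)
    (hall : ∀ hx : x ∈ s,
      ¬ Nonempty (((G.induce s).induce ((G.induce s).connectedComponentMk ⟨x, hx⟩).supp) ≃g T)) :
    kappa (G.induce s) T ≤ kappa G T := by
  haveI : Finite G.ConnectedComponent := Quot.finite _
  have hpex : ∀ c : (G.induce s).ConnectedComponent,
      Nonempty (((G.induce s).induce c.supp) ≃g T) → ∀ hx : x ∈ s, (⟨x, hx⟩ : ↥s) ∉ c.supp := by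
    intro c hc hx hmem
    rw [ConnectedComponent.mem_supp_iff] at hmem
    exact hall hx (hmem ▸ hc)
  apply Nat.card_le_card_of_injective
    (fun p => (⟨compMap G s p.1, ⟨compMapIso (closed_of_pex hcl (hpex p.1 p.2)) p.2.some⟩⟩ :
      {c : G.ConnectedComponent // Nonempty ((G.induce c.supp) ≃g T)}))
  rintro ⟨c, hc⟩ ⟨c', hc'⟩ h
  simp only [Subtype.mk.injEq] at h
  exact Subtype.ext (compMap_inj (closed_of_pex hcl (hpex c hc)) (closed_of_pex hcl (hpex c' hc')) h)

lemma kappa_le_succ {s : Set V} {x : V}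
    (hcl : ∀ a ∈ s, ∀ b, G.Adj a b → b ∈ s ∨ a = x) (T : SimpleGraph W) :
    kappa (G.induce s) T ≤ kappa G T + 1 := by
  classical
  haveI : Finite G.ConnectedComponent := Quot.finite _
  haveI : Fintype {c : G.ConnectedComponent // Nonempty ((G.induce c.supp) ≃g T)} :=
    Fintype.ofFinite _
  rw [show kappa G T + 1 = Nat.card (Option {c : G.ConnectedComponent //
      Nonempty ((G.induce c.supp) ≃g T)}) from (Finite.card_option).symm]
  apply Nat.card_le_card_of_injective
    (fun p => if h : ∀ hx : x ∈ s, (⟨x, hx⟩ : ↥s) ∉ p.1.supp then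
      some ⟨compMap G s p.1, ⟨compMapIso (closed_of_pex hcl h) p.2.some⟩⟩ else none)
  rintro ⟨c, hc⟩ ⟨c', hc'⟩ h
  dsimp only at h
  by_cases h1 : ∀ hx : x ∈ s, (⟨x, hx⟩ : ↥s) ∉ c.supp <;>
    by_cases h2 : ∀ hx : x ∈ s, (⟨x, hx⟩ : ↥s) ∉ c'.supp
  · rw [dif_pos h1, dif_pos h2, Option.some.injEq, Subtype.mk.injEq] at h
    exact Subtype.ext (compMap_inj (closed_of_pex hcl h1) (closed_of_pex hcl h2) h)
  · rw [dif_pos h1, dif_neg h2] at h; exact absurd h (by simp)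
  · rw [dif_neg h1, dif_pos h2] at h; exact absurd h (by simp)
  · push_neg at h1 h2
    obtain ⟨hx1, hm1⟩ := h1
    obtain ⟨hx2, hm2⟩ := h2
    rw [ConnectedComponent.mem_supp_iff] at hm1 hm2
    refine Subtype.ext ?_
    dsimp only
    rw [← hm1, ← hm2]

lemma ncard_neighborSet_induce_le (s : Set V) (a : ↥s) :
    ((G.induce s).neighborSet a).ncard ≤ (G.neighborSet a.val).ncard := by
  have himg : Subtype.val '' ((G.induce s).neighborSet a) ⊆ G.neighborSet a.val := by
    rintro y ⟨y', hy', rfl⟩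
    exact hy'
  calc ((G.induce s).neighborSet a).ncard
      = (Subtype.val '' ((G.induce s).neighborSet a)).ncard :=
        (Set.ncard_image_of_injective _ Subtype.val_injective).symm
    _ ≤ (G.neighborSet a.val).ncard := Set.ncard_le_ncard himg (Set.toFinite _)

lemma subcubic_induce (hsub : Subcubic G) (s : Set V) : Subcubic (G.induce s) :=
  fun a => le_trans (ncard_neighborSet_induce_le s a) (hsub a.val)

end FiniteV

lemma iso_ncard_neighborSet {A : SimpleGraph V} {B : SimpleGraph W} (e : A ≃g B) (v : V) :
    (A.neighborSet v).ncard = (B.neighborSet (e v)).ncard := by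
  rw [← Nat.card_coe_set_eq, ← Nat.card_coe_set_eq]
  exact Nat.card_congr (e.mapNeighborSet v)

/-- the set of sizes of acyclic matchings -/
def amSet (G : SimpleGraph V) : Set ℕ :=
  {k | ∃ M : G.Subgraph, IsAcyclicMatching G M ∧ M.edgeSet.ncard = k}

lemma zero_mem_amSet : 0 ∈ amSet G := by
  refine ⟨⊥, ⟨fun v hv => absurd hv (by simp), ?_⟩, by simp⟩
  rw [support_bot']
  intro v
  exact absurd v.2 (Set.notMem_empty _)

lemma bddAbove_amSet [Fintype V] : BddAbove (amSet G) := by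
  classical
  refine ⟨(Set.univ : Set (Sym2 V)).ncard, ?_⟩
  rintro k ⟨M, _, rfl⟩
  exact Set.ncard_le_ncard (Set.subset_univ _) Set.finite_univ

lemma acyclicMatchingNumber_mem [Fintype V] : acyclicMatchingNumber G ∈ amSet G :=
  Nat.sSup_mem ⟨0, zero_mem_amSet⟩ bddAbove_amSet

lemma le_acyclicMatchingNumber [Fintype V] {k : ℕ} (hk : k ∈ amSet G) :
    k ≤ acyclicMatchingNumber G :=
  le_csSup bddAbove_amSet hk

end Aux

/-! ### decidability and small computations for the special graphs -/

instance : DecidableRel K4plus.Adj := fun a b => by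
  unfold K4plus; exact inferInstanceAs (Decidable (_ ∧ _))
instance : DecidableRel K23.Adj := fun a b => by
  unfold K23 completeBipartiteGraph; dsimp only; infer_instance
instance : DecidableRel K33.Adj := fun a b => by
  unfold K33 completeBipartiteGraph; dsimp only; infer_instance

lemma K33_ncard_neighborSet (z : Fin 3 ⊕ Fin 3) : (K33.neighborSet z).ncard = 3 := by
  rw [← Nat.card_coe_set_eq, Nat.card_eq_fintype_card]
  have : Fintype.card (K33.neighborSet z) = K33.degree z := K33.card_neighborSet_eq_degree z
  rw [this]
  revert z
  decide

lemma not_iso_K23_K4plus : ¬ Nonempty (K23 ≃g K4plus) := by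
  rintro ⟨e⟩
  have h := e.card_edgeFinset_eq
  have h23 : K23.edgeFinset.card = 6 := by rfl
  have h4 : K4plus.edgeFinset.card = 7 := by rfl
  rw [h23, h4] at h
  exact absurd h (by norm_num)

/-! ### The master deletion lemma -/

lemma master_lemma {V : Type} [Fintype V] (G : SimpleGraph V) (u w x : V) (D : Set V)
    (hsub : Subcubic G)
    (hlt : (acyclicMatchingNumber G : ℚ) < acmBound G)
    (hmin4 : ∀ (W : Type) [Fintype W] (H : SimpleGraph W), Subcubic H → NoIsolatedVerts H →
       (acyclicMatchingNumber H : ℚ) < acmBound H → Fintype.card V ≤ Fintype.card W)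
    (huw : G.Adj u w)
    (hNu : ∀ y, G.Adj u y → y = w)
    (hD3 : 3 ≤ D.ncard)
    (huD : u ∈ D) (hwD : w ∈ D)
    (hwnb : ∀ y ∈ Dᶜ, G.Adj w y → y = x)
    (hniso : NoIsolatedVerts (G.induce Dᶜ))
    (hslack : kappa (G.induce Dᶜ) K23 + kappa (G.induce Dᶜ) K4plus +
        2 * kappa (G.induce Dᶜ) K33 + D.ncard ≤
        kappa G K23 + kappa G K4plus + 2 * kappa G K33 + 4) : False := by
  classical
  letI : Fintype ↥(Dᶜ) := Fintype.ofFinite _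
  set H : SimpleGraph ↥(Dᶜ) := G.induce Dᶜ with hH
  -- extend an optimal acyclic matching of H by the edge uw
  obtain ⟨M', ⟨hm', hacy'⟩, hcard'⟩ := (acyclicMatchingNumber_mem (G := H))
  set A : Set V := Subtype.val '' M'.support with hA
  have hAs : A ⊆ Dᶜ := by
    rintro a ⟨a', _, rfl⟩
    exact a'.2
  set M : G.Subgraph := (M'.map (ihom G Dᶜ)) ⊔ G.subgraphOfAdj huw with hM
  have hsupM : M.support = A ∪ {u, w} := by
    rw [hM, support_sup', support_map', SimpleGraph.support_subgraphOfAdj]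
    rfl
  have hmatch : M.IsMatching := by
    apply SimpleGraph.Subgraph.IsMatching.sup (isMatching_map ihom_inj hm')
      (SimpleGraph.Subgraph.IsMatching.subgraphOfAdj huw)
    rw [support_map', SimpleGraph.support_subgraphOfAdj]
    rw [Set.disjoint_left]
    rintro a ha hmem
    have haD : a ∈ Dᶜ := hAs ha
    rcases hmem with rfl | rfl
    · exact haD huD
    · exact haD hwD
  have hAacy : (G.induce A).IsAcyclic := by
    apply isAcyclic_of_embedding (induceInduceIso Dᶜ M'.support).symm.toEmbedding
    exact hacy'
  have hacyM : (G.induce M.support).IsAcyclic := by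
    rw [hsupM]
    apply acyclic_extend hAacy (fun hu => (hAs hu) huD) (fun hw => (hAs hw) hwD) hNu
    intro y hy hadj
    exact hwnb y (hAs hy) hadj
  have hcount : M.edgeSet.ncard = acyclicMatchingNumber H + 1 := by
    rw [hM, Subgraph.edgeSet_sup, edgeSet_map', SimpleGraph.edgeSet_subgraphOfAdj]
    rw [Set.ncard_union_eq ?dis (Set.toFinite _) (Set.toFinite _)]
    · rw [Set.ncard_image_of_injective _ (Sym2.map.injective ihom_inj),
        Set.ncard_singleton, hcard']
    case dis =>
      rw [Set.disjoint_right]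
      rintro e he ⟨e', _, rfl⟩
      rw [Set.mem_singleton_iff] at he
      have : u ∈ Sym2.map (ihom G Dᶜ) e' := by rw [he]; simp
      rw [Sym2.mem_map] at this
      obtain ⟨y, _, hy⟩ := this
      have hyu : y.val = u := hy
      exact y.2 (hyu ▸ huD)
  have hmem : acyclicMatchingNumber H + 1 ∈ amSet G := ⟨M, ⟨hmatch, hacyM⟩, hcount⟩
  have hle : acyclicMatchingNumber H + 1 ≤ acyclicMatchingNumber G :=
    le_acyclicMatchingNumber hmem
  -- cardinalities
  have hDn : D.ncard + (Dᶜ).ncard = Fintype.card V := by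
    rw [← Nat.card_eq_fintype_card]
    exact Set.ncard_add_ncard_compl D
  have hcardH : Fintype.card ↥(Dᶜ) = (Dᶜ).ncard := by
    rw [← Nat.card_eq_fintype_card, Nat.card_coe_set_eq]
  -- H is a counterexample
  have hltH : (acyclicMatchingNumber H : ℚ) < acmBound H := by
    rw [acmBound, lt_div_iff₀ (by norm_num : (0:ℚ) < 4)]
    rw [acmBound, lt_div_iff₀ (by norm_num : (0:ℚ) < 4)] at hlt
    have h1 : (acyclicMatchingNumber H : ℚ) + 1 ≤ (acyclicMatchingNumber G : ℚ) := by
      exact_mod_cast hle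
    have h2 : (kappa H K23 : ℚ) + kappa H K4plus + 2 * kappa H K33 + D.ncard ≤
        (kappa G K23 : ℚ) + kappa G K4plus + 2 * kappa G K33 + 4 := by
      exact_mod_cast hslack
    have h3 : (D.ncard : ℚ) + (Fintype.card ↥(Dᶜ) : ℚ) = Fintype.card V := by
      rw [hcardH]
      exact_mod_cast hDn
    linarith
  have hfinal := hmin4 ↥(Dᶜ) H (subcubic_induce hsub Dᶜ) hniso hltH
  rw [hcardH] at hfinal
  omega

/-- In a minimum-order counterexample, no two vertices of degree 1 have a common
neighbor. -/
theorem stmt_4 {V : Type} [Fintype V] (G : SimpleGraph V)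
    (hmin : IsMinCounterexample G) :
    ∀ u v w : V, u ≠ v → (G.neighborSet u).ncard = 1 → (G.neighborSet v).ncard = 1 →
      G.Adj u w → G.Adj v w → False := by
  classical
  obtain ⟨hsub, hniso, hlt, hmin4⟩ := hmin
  intro u v w huv h1u h1v hadj_uw hadj_vw
  -- basic neighbor facts
  have hNu : ∀ y, G.Adj u y → y = w := by
    obtain ⟨a, hNa⟩ := Set.ncard_eq_one.mp h1u
    have hwa : w = a := by
      have : w ∈ G.neighborSet u := hadj_uw
      rwa [hNa, Set.mem_singleton_iff] at this
    intro y hy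
    have : y ∈ G.neighborSet u := hy
    rw [hNa, Set.mem_singleton_iff] at this
    rw [this, ← hwa]
  have hNv : ∀ y, G.Adj v y → y = w := by
    obtain ⟨a, hNa⟩ := Set.ncard_eq_one.mp h1v
    have hwa : w = a := by
      have : w ∈ G.neighborSet v := hadj_vw
      rwa [hNa, Set.mem_singleton_iff] at this
    intro y hy
    have : y ∈ G.neighborSet v := hy
    rw [hNa, Set.mem_singleton_iff] at this
    rw [this, ← hwa]
  have huw_ne : u ≠ w := hadj_uw.ne
  have hvw_ne : v ≠ w := hadj_vw.ne
  -- neighbors of other vertices: adjacency back to u or v forces equal to w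
  have hbu : ∀ y, G.Adj y u → y = w := fun y hy => hNu y hy.symm
  have hbv : ∀ y, G.Adj y v → y = w := fun y hy => hNv y hy.symm
  by_cases hx : ∃ x, G.Adj w x ∧ x ≠ u ∧ x ≠ v
  · obtain ⟨x, hwx, hxu, hxv⟩ := hx
    have hxw : x ≠ w := hwx.ne'
    -- N(w) = {u, v, x}
    have hNw : ∀ y, G.Adj w y → y = u ∨ y = v ∨ y = x := by
      have hsubw : ({u, v, x} : Set V) ⊆ G.neighborSet w :=
        by
          rintro y (rfl | rfl | rfl)
          · exact hadj_uw.symm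
          · exact hadj_vw.symm
          · exact hwx
      have hc3 : ({u, v, x} : Set V).ncard = 3 := by
        rw [Set.ncard_insert_of_notMem (by simp [huv, Ne.symm hxu]) (Set.toFinite _),
          Set.ncard_insert_of_notMem (by simp [Ne.symm hxv]) (Set.toFinite _),
          Set.ncard_singleton]
      have heq : ({u, v, x} : Set V) = G.neighborSet w := by
        apply Set.eq_of_subset_of_ncard_le hsubw _ (Set.toFinite _)
        rw [hc3]
        exact hsub w
      intro y hy
      have : y ∈ ({u, v, x} : Set V) := by rw [heq]; exact hy
      simpa using this
    by_cases hxleaf : ∀ y, G.Adj x y → y = w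
    · -- Case B1 : delete {u, v, w, x}
      set D : Set V := {u, v, w, x} with hD
      have huD : u ∈ D := by simp [hD]
      have hvD : v ∈ D := by simp [hD]
      have hwD : w ∈ D := by simp [hD]
      have hxD : x ∈ D := by simp [hD]
      have hDn : D.ncard = 4 := by
        rw [hD, Set.ncard_insert_of_notMem (by simp [huv, huw_ne, Ne.symm hxu]) (Set.toFinite _),
          Set.ncard_insert_of_notMem (by simp [hvw_ne, Ne.symm hxv]) (Set.toFinite _),
          Set.ncard_insert_of_notMem (by simp [Ne.symm hxw]) (Set.toFinite _),
          Set.ncard_singleton]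
      have hmemD : ∀ z, z ∈ D ↔ (z = u ∨ z = v ∨ z = w ∨ z = x) := by
        intro z; simp [hD]
      have hnD : ∀ a ∈ Dᶜ, ∀ b, G.Adj a b → b ∈ Dᶜ := by
        intro a ha b hab
        intro hbD
        rcases (hmemD b).mp hbD with rfl | rfl | rfl | rfl
        · exact ha ((hmemD a).mpr (Or.inr (Or.inr (Or.inl (hbu a hab)))))
        · exact ha ((hmemD a).mpr (Or.inr (Or.inr (Or.inl (hbv a hab)))))
        · rcases hNw a hab.symm with rfl | rfl | rfl
          · exact ha huD
          · exact ha hvD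
          · exact ha hxD
        · exact ha ((hmemD a).mpr (Or.inr (Or.inr (Or.inl (hxleaf a hab.symm)))))
      have hcl : ∀ a ∈ Dᶜ, ∀ b, G.Adj a b → b ∈ Dᶜ ∨ a = u :=
        fun a ha b hab => Or.inl (hnD a ha b hab)
      have hxnotin : u ∉ Dᶜ := fun h => h huD
      apply master_lemma G u w u D hsub hlt hmin4 hadj_uw hNu (by omega) huD hwD
      · intro y hy hadj
        exfalso
        rcases hNw y hadj with rfl | rfl | rfl
        · exact hy huD
        · exact hy hvD
        · exact hy hxD
      · intro a
        obtain ⟨b, hb⟩ := hniso a.val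
        have hbD : b ∈ Dᶜ := hnD a.val a.2 b hb
        exact ⟨⟨b, hbD⟩, by exact hb⟩
      · have h23 := kappa_le_of_not_special hcl K23 (fun hx' => absurd hx' hxnotin)
        have h4 := kappa_le_of_not_special hcl K4plus (fun hx' => absurd hx' hxnotin)
        have h33 := kappa_le_of_not_special hcl K33 (fun hx' => absurd hx' hxnotin)
        omega
    · -- Case B2 : delete {u, v, w}, exceptional vertex x
      push_neg at hxleaf
      obtain ⟨y0, hy0, hy0w⟩ := hxleaf
      set D : Set V := {u, v, w} with hD
      have huD : u ∈ D := by simp [hD]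
      have hvD : v ∈ D := by simp [hD]
      have hwD : w ∈ D := by simp [hD]
      have hDn : D.ncard = 3 := by
        rw [hD, Set.ncard_insert_of_notMem (by simp [huv, huw_ne]) (Set.toFinite _),
          Set.ncard_insert_of_notMem (by simp [hvw_ne]) (Set.toFinite _),
          Set.ncard_singleton]
      have hmemD : ∀ z, z ∈ D ↔ (z = u ∨ z = v ∨ z = w) := by
        intro z; simp [hD]
      have hxDc : x ∈ Dᶜ := by
        intro hxD
        rcases (hmemD x).mp hxD with rfl | rfl | rfl
        · exact hxu rfl
        · exact hxv rfl
        · exact hxw rfl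
      have hcl : ∀ a ∈ Dᶜ, ∀ b, G.Adj a b → b ∈ Dᶜ ∨ a = x := by
        intro a ha b hab
        by_cases hbD : b ∈ D
        · rcases (hmemD b).mp hbD with rfl | rfl | rfl
          · exact absurd ((hmemD a).mpr (Or.inr (Or.inr (hbu a hab)))) ha
          · exact absurd ((hmemD a).mpr (Or.inr (Or.inr (hbv a hab)))) ha
          · rcases hNw a hab.symm with rfl | rfl | rfl
            · exact absurd huD ha
            · exact absurd hvD ha
            · exact Or.inr rfl
        · exact Or.inl hbD
      have hwnb : ∀ y ∈ Dᶜ, G.Adj w y → y = x := by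
        intro y hy hadj
        rcases hNw y hadj with rfl | rfl | rfl
        · exact absurd huD hy
        · exact absurd hvD hy
        · rfl
      apply master_lemma G u w x D hsub hlt hmin4 hadj_uw hNu (by omega) huD hwD hwnb
      · -- no isolated vertices
        intro a
        obtain ⟨b, hb⟩ := hniso a.val
        by_cases hbD : b ∈ D
        · rcases (hmemD b).mp hbD with rfl | rfl | rfl
          · exact absurd ((hmemD a.val).mpr (Or.inr (Or.inr (hbu a.val hb)))) a.2
          · exact absurd ((hmemD a.val).mpr (Or.inr (Or.inr (hbv a.val hb)))) a.2
          · -- a is a neighbor of w, so a = x, which has neighbor y0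
            have hax : a.val = x := hwnb a.val a.2 hb.symm
            have hy0D : y0 ∈ Dᶜ := by
              intro hy0D
              rcases (hmemD y0).mp hy0D with rfl | rfl | rfl
              · exact hxw (hNu x hy0.symm)
              · exact hxw (hNv x hy0.symm)
              · exact hy0w rfl
            refine ⟨⟨y0, hy0D⟩, ?_⟩
            show G.Adj a.val y0
            rw [hax]
            exact hy0
        · exact ⟨⟨b, hbD⟩, by exact hb⟩
      · -- the kappa slack bound
        have h33 : kappa (G.induce Dᶜ) K33 ≤ kappa G K33 := by
          apply kappa_le_of_not_special hcl K33
          intro hx' ⟨e⟩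
          -- x has at most 2 neighbors in the induced graph, but K33 is 3-regular
          set H : SimpleGraph ↥(Dᶜ) := G.induce Dᶜ with hH
          set c₀ := H.connectedComponentMk ⟨x, hx'⟩ with hc₀
          have hmem : (⟨x, hx'⟩ : ↥(Dᶜ)) ∈ c₀.supp := by
            rw [ConnectedComponent.mem_supp_iff]
          set a : ↥c₀.supp := ⟨⟨x, hx'⟩, hmem⟩ with ha
          have hdeg3 : ((H.induce c₀.supp).neighborSet a).ncard = 3 := by
            rw [iso_ncard_neighborSet e a]
            exact K33_ncard_neighborSet _
          have hle1 : ((H.induce c₀.supp).neighborSet a).ncard ≤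
              (H.neighborSet ⟨x, hx'⟩).ncard := ncard_neighborSet_induce_le _ _
          have hle2 : (H.neighborSet ⟨x, hx'⟩).ncard ≤ (G.neighborSet x \ {w}).ncard := by
            have himg : Subtype.val '' (H.neighborSet ⟨x, hx'⟩) ⊆ G.neighborSet x \ {w} := by
              rintro z ⟨z', hz', rfl⟩
              refine ⟨hz', ?_⟩
              intro hzw
              rw [Set.mem_singleton_iff] at hzw
              exact (hzw ▸ z'.2) hwD
            calc (H.neighborSet ⟨x, hx'⟩).ncard
                = (Subtype.val '' (H.neighborSet ⟨x, hx'⟩)).ncard :=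
                  (Set.ncard_image_of_injective _ Subtype.val_injective).symm
              _ ≤ _ := Set.ncard_le_ncard himg (Set.toFinite _)
          have hle3 : (G.neighborSet x \ {w}).ncard ≤ 2 := by
            have hwmem : w ∈ G.neighborSet x := hwx.symm
            have := Set.ncard_diff_singleton_add_one hwmem (Set.toFinite _)
            have hx3 := hsub x
            omega
          omega
        by_cases h23c : ∀ hx' : x ∈ Dᶜ, ¬ Nonempty (((G.induce Dᶜ).induce
            ((G.induce Dᶜ).connectedComponentMk ⟨x, hx'⟩).supp) ≃g K23)
        · have h23 := kappa_le_of_not_special hcl K23 h23c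
          have h4 := kappa_le_succ hcl K4plus
          omega
        · push_neg at h23c
          obtain ⟨hx', hiso23⟩ := h23c
          have h4c : ∀ hx'' : x ∈ Dᶜ, ¬ Nonempty (((G.induce Dᶜ).induce
              ((G.induce Dᶜ).connectedComponentMk ⟨x, hx''⟩).supp) ≃g K4plus) := by
            intro hx'' ⟨e4⟩
            obtain ⟨e23⟩ := hiso23
            exact not_iso_K23_K4plus ⟨e23.symm.trans e4⟩
          have h4 := kappa_le_of_not_special hcl K4plus h4c
          have h23 := kappa_le_succ hcl K23
          omega
  · -- Case A : N(w) ⊆ {u, v}, delete {u, v, w}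
    push_neg at hx
    have hNw : ∀ y, G.Adj w y → y = u ∨ y = v := by
      intro y hy
      by_cases h : y = u
      · exact Or.inl h
      · exact Or.inr (hx y hy h)
    set D : Set V := {u, v, w} with hD
    have huD : u ∈ D := by simp [hD]
    have hvD : v ∈ D := by simp [hD]
    have hwD : w ∈ D := by simp [hD]
    have hDn : D.ncard = 3 := by
      rw [hD, Set.ncard_insert_of_notMem (by simp [huv, huw_ne]) (Set.toFinite _),
        Set.ncard_insert_of_notMem (by simp [hvw_ne]) (Set.toFinite _),
        Set.ncard_singleton]
    have hmemD : ∀ z, z ∈ D ↔ (z = u ∨ z = v ∨ z = w) := by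
      intro z; simp [hD]
    have hnD : ∀ a ∈ Dᶜ, ∀ b, G.Adj a b → b ∈ Dᶜ := by
      intro a ha b hab hbD
      rcases (hmemD b).mp hbD with rfl | rfl | rfl
      · exact ha ((hmemD a).mpr (Or.inr (Or.inr (hbu a hab))))
      · exact ha ((hmemD a).mpr (Or.inr (Or.inr (hbv a hab))))
      · rcases hNw a hab.symm with rfl | rfl
        · exact ha huD
        · exact ha hvD
    have hcl : ∀ a ∈ Dᶜ, ∀ b, G.Adj a b → b ∈ Dᶜ ∨ a = u :=
      fun a ha b hab => Or.inl (hnD a ha b hab)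
    have hxnotin : u ∉ Dᶜ := fun h => h huD
    apply master_lemma G u w u D hsub hlt hmin4 hadj_uw hNu (by omega) huD hwD
    · intro y hy hadj
      exfalso
      rcases hNw y hadj with rfl | rfl
      · exact hy huD
      · exact hy hvD
    · intro a
      obtain ⟨b, hb⟩ := hniso a.val
      exact ⟨⟨b, hnD a.val a.2 b hb⟩, by exact hb⟩
    · have h23 := kappa_le_of_not_special hcl K23 (fun hx' => absurd hx' hxnotin)
      have h4 := kappa_le_of_not_special hcl K4plus (fun hx' => absurd hx' hxnotin)
      have h33 := kappa_le_of_not_special hcl K33 (fun hx' => absurd hx' hxnotin)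
      omega
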